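/- In the partial information model with agents 1,...,n, for any nonempty subset S ⊆ [n] of agents, the iterated conditional expectation E[ E[ ... E[Y | S_{i_1}] ... | S_{i_{k-1}}] | S_{i_k}] for any ordering (i_1,...,i_k) of S equals Σ_{T : S ⊆ T} X_T. In particular, it depends only on the set S and not the ordering. -/

import Mathlib

open MeasureTheory ProbabilityTheory

/-- The σ-algebra generated by agent `i`'s signals `{X T : i ∈ T}`. -/
def agentSigma {Ω : Type*} {n : ℕ} (X : Finset (Fin n) → Ω → ℝ) (i : Fin n) :
    MeasurableSpace Ω :=
  ⨆ T ∈ {T : Finset (Fin n) | i ∈ T}, MeasurableSpace.comap (X T) inferInstance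

/-- Iterated expectation query.  `iterQ X [] = Y = ∑ T, X T`, and
`iterQ X (i :: L) = E[iterQ X L ∣ S_i]`.  Thus `iterQ X [i_k, …, i_1]` is the
query `iter(i_1, …, i_k)` of the paper. -/
noncomputable def iterQ {Ω : Type*} [MeasureSpace Ω] {n : ℕ}
    (X : Finset (Fin n) → Ω → ℝ) : List (Fin n) → Ω → ℝ
  | [] => fun ω => ∑ T : Finset (Fin n), X T ω
  | (i :: L) => (ℙ : Measure Ω)[iterQ X L | agentSigma X i]

lemma agentSigma_le {Ω : Type*} [MeasureSpace Ω] {n : ℕ}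
    (X : Finset (Fin n) → Ω → ℝ) (hmeas : ∀ T, Measurable (X T)) (i : Fin n) :
    agentSigma X i ≤ (inferInstance : MeasurableSpace Ω) :=
  iSup₂_le fun T _ => (hmeas T).comap_le

/-- Single-summand computation: `E[X T | S_i]` is `X T` if `i ∈ T`, else `0`. -/
lemma condexp_single {Ω : Type*} [MeasureSpace Ω] [IsProbabilityMeasure (ℙ : Measure Ω)]
    {n : ℕ} (X : Finset (Fin n) → Ω → ℝ)
    (hindep : iIndepFun X ℙ)
    (hmeas : ∀ T, Measurable (X T))
    (hL2 : ∀ T, MemLp (X T) 2 ℙ)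
    (hmean : ∀ T, ∫ ω, X T ω ∂ℙ = 0)
    (i : Fin n) (T : Finset (Fin n)) :
    (ℙ : Measure Ω)[X T | agentSigma X i]
      =ᵐ[ℙ] fun ω => if i ∈ T then X T ω else 0 := by
  have hm := agentSigma_le X hmeas i
  haveI : SigmaFinite ((ℙ : Measure Ω).trim hm) := by infer_instance
  have hint : Integrable (X T) ℙ := (hL2 T).integrable one_le_two
  by_cases hiT : i ∈ T
  · have hsm : StronglyMeasurable[agentSigma X i] (X T) := by
      refine Measurable.stronglyMeasurable ?_
      refine measurable_iff_comap_le.mpr ?_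
      exact le_iSup₂ (f := fun T _ => MeasurableSpace.comap (X T) inferInstance) T hiT
    have := condExp_of_stronglyMeasurable hm hsm hint
    rw [this]
    filter_upwards with ω
    simp [hiT]
  · have hle₁ : MeasurableSpace.comap (X T) inferInstance
        ≤ (inferInstance : MeasurableSpace Ω) := (hmeas T).comap_le
    have hsm : StronglyMeasurable[MeasurableSpace.comap (X T) inferInstance] (X T) :=
      Measurable.stronglyMeasurable (measurable_iff_comap_le.mpr le_rfl)
    have hind : Indep (MeasurableSpace.comap (X T) inferInstance) (agentSigma X i) ℙ := by
      have h := indep_iSup_of_disjoint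
        (m := fun T : Finset (Fin n) => MeasurableSpace.comap (X T) inferInstance)
        (fun T => (hmeas T).comap_le) ((iIndepFun_iff_iIndep _ _ _).mp hindep)
        (S := {T}) (T := {T' : Finset (Fin n) | i ∈ T'})
        (by simp [Set.disjoint_left, hiT])
      simpa [agentSigma] using h
    have := condExp_indep_eq hle₁ hm hsm hind
    refine this.trans ?_
    filter_upwards with ω
    simp [hmean T, hiT]

lemma condexp_sum_agent {Ω : Type*} [MeasureSpace Ω] [IsProbabilityMeasure (ℙ : Measure Ω)]
    {n : ℕ} (X : Finset (Fin n) → Ω → ℝ)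
    (hindep : iIndepFun X ℙ)
    (hmeas : ∀ T, Measurable (X T))
    (hL2 : ∀ T, MemLp (X T) 2 ℙ)
    (hmean : ∀ T, ∫ ω, X T ω ∂ℙ = 0)
    (i : Fin n) (A : Finset (Finset (Fin n))) :
    (ℙ : Measure Ω)[fun ω => ∑ T ∈ A, X T ω | agentSigma X i]
      =ᵐ[ℙ] fun ω => ∑ T ∈ A.filter (fun T => i ∈ T), X T ω := by
  have hm := agentSigma_le X hmeas i
  have hint : ∀ T ∈ A, Integrable (X T) ℙ := fun T _ => (hL2 T).integrable one_le_two
  have hfn : (fun ω => ∑ T ∈ A, X T ω) = ∑ T ∈ A, X T := by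
    ext ω; simp
  rw [hfn]
  have h1 := condExp_finsetSum (μ := (ℙ : Measure Ω)) (m := agentSigma X i) hint
  refine h1.trans ?_
  have hfn2 : (∑ T ∈ A, (ℙ : Measure Ω)[X T | agentSigma X i])
      = fun ω => ∑ T ∈ A, ((ℙ : Measure Ω)[X T | agentSigma X i]) ω := by
    ext ω; simp
  rw [hfn2]
  have h2 : ∀ᵐ ω ∂(ℙ : Measure Ω), ∀ T ∈ A,
      ((ℙ : Measure Ω)[X T | agentSigma X i]) ω = if i ∈ T then X T ω else 0 := by
    have := (MeasureTheory.ae_ball_iff (μ := (ℙ : Measure Ω))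
      A.countable_toSet
      (p := fun ω (T : Finset (Fin n)) (_ : T ∈ (A : Set (Finset (Fin n)))) =>
        ((ℙ : Measure Ω)[X T | agentSigma X i]) ω = if i ∈ T then X T ω else 0)).mpr
      (fun T _ => condexp_single X hindep hmeas hL2 hmean i T)
    filter_upwards [this] with ω hω
    exact fun T hT => hω T (Finset.mem_coe.mpr hT)
  filter_upwards [h2] with ω hω
  rw [Finset.sum_congr rfl hω]
  exact (Finset.sum_filter _ _).symm

/-- In the partial information model, for any nonempty list of agents `L`,
the iterated expectation query equals `∑_{T : L.toFinset ⊆ T} X T` a.s.; in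
particular it depends only on the set of agents appearing in `L`, not on the
ordering. -/
theorem stmt1 {Ω : Type*} [MeasureSpace Ω] [IsProbabilityMeasure (ℙ : Measure Ω)]
    (n : ℕ) (X : Finset (Fin n) → Ω → ℝ)
    (hindep : iIndepFun X ℙ)
    (hmeas : ∀ T, Measurable (X T))
    (hL2 : ∀ T, MemLp (X T) 2 ℙ)
    (hmean : ∀ T, ∫ ω, X T ω ∂ℙ = 0)
    (hempty : X ∅ = 0)
    (L : List (Fin n)) (hL : L ≠ []) :
    iterQ X L
      =ᵐ[ℙ] fun ω => ∑ T ∈ Finset.univ.filter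
        (fun T : Finset (Fin n) => L.toFinset ⊆ T), X T ω := by
  induction L with
  | nil => exact absurd rfl hL
  | cons i L ih =>
    rcases eq_or_ne L ([] : List (Fin n)) with rfl | hL'
    · have h0 : iterQ X (i :: List.nil) = (ℙ : Measure Ω)[(iterQ X List.nil) | agentSigma X i] := rfl
      have heq : iterQ X List.nil = fun ω => ∑ T ∈ Finset.univ, X T ω := rfl
      rw [h0, heq]
      have := condexp_sum_agent X hindep hmeas hL2 hmean i Finset.univ
      refine this.trans ?_
      · filter_upwards with ω
        congr 1
        apply Finset.filter_congr
        intro T _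
        simp
    · have step : (ℙ : Measure Ω)[iterQ X L | agentSigma X i]
          =ᵐ[ℙ] (ℙ : Measure Ω)[fun ω => ∑ T ∈ Finset.univ.filter
            (fun T : Finset (Fin n) => L.toFinset ⊆ T), X T ω | agentSigma X i] :=
        condExp_congr_ae (ih hL')
      refine step.trans ((condexp_sum_agent X hindep hmeas hL2 hmean i _).trans ?_)
      filter_upwards with ω
      congr 1
      rw [Finset.filter_filter]
      apply Finset.filter_congr
      intro T _
      simp [Finset.insert_subset_iff, and_comm]
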